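/- arXiv:1810.01923 — 5 statements merged into one kernel-verified Lean document; each statement's English description precedes it below -/
import Mathlib

section
/- Let f : ℝ^n → ℝ ∪ {+∞} be a proper, convex, lower semicontinuous function and let x ∈ ℝ^n. If u is the unique minimizer over ℝ^n of y ↦ f(y) + (1/2)‖y − x‖² and v is the unique minimizer over ℝ^n of y ↦ f*(y) + (1/2)‖y − x‖², then u + v = x (Moreau decomposition prox_f(x) + prox_{f*}(x) = x). -/
/-- The Fenchel conjugate of `f : ℝ^n → ℝ ∪ {+∞}` (values in `EReal`):
`f*(y) = sup_z (⟨y, z⟩ - f z)`. -/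
noncomputable def fenchelConj {n : ℕ} (f : EuclideanSpace ℝ (Fin n) → EReal)
    (y : EuclideanSpace ℝ (Fin n)) : EReal :=
  ⨆ z : EuclideanSpace ℝ (Fin n), ((inner ℝ y z : ℝ) : EReal) - f z

/-- Moreau decomposition: `prox_f(x) + prox_{f*}(x) = x` for a proper convex
lower semicontinuous `f : ℝ^n → ℝ ∪ {+∞}`. -/
theorem moreau_decomposition {n : ℕ} (f : EuclideanSpace ℝ (Fin n) → EReal)
    (hproper : ∃ z, f z ≠ ⊤) (hnotbot : ∀ z, f z ≠ ⊥)
    (hconv : ∀ (y z : EuclideanSpace ℝ (Fin n)) (a b : ℝ), 0 ≤ a → 0 ≤ b → a + b = 1 →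
      f (a • y + b • z) ≤ (a : EReal) * f y + (b : EReal) * f z)
    (hlsc : LowerSemicontinuous f)
    (x u v : EuclideanSpace ℝ (Fin n))
    (hu_min : ∀ y, f u + (((1 : ℝ)/2 * ‖u - x‖ ^ 2 : ℝ) : EReal)
      ≤ f y + (((1 : ℝ)/2 * ‖y - x‖ ^ 2 : ℝ) : EReal))
    (hu_unique : ∀ u', (∀ y, f u' + (((1 : ℝ)/2 * ‖u' - x‖ ^ 2 : ℝ) : EReal)
      ≤ f y + (((1 : ℝ)/2 * ‖y - x‖ ^ 2 : ℝ) : EReal)) → u' = u)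
    (hv_min : ∀ y, fenchelConj f v + (((1 : ℝ)/2 * ‖v - x‖ ^ 2 : ℝ) : EReal)
      ≤ fenchelConj f y + (((1 : ℝ)/2 * ‖y - x‖ ^ 2 : ℝ) : EReal))
    (hv_unique : ∀ v', (∀ y, fenchelConj f v' + (((1 : ℝ)/2 * ‖v' - x‖ ^ 2 : ℝ) : EReal)
      ≤ fenchelConj f y + (((1 : ℝ)/2 * ‖y - x‖ ^ 2 : ℝ) : EReal)) → v' = v) :
    u + v = x := by
  obtain ⟨z₀, hz₀⟩ := hproper
  -- f u is finite
  have hfu_ne_top : f u ≠ ⊤ := by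
    intro h
    have hm := hu_min z₀
    rw [h] at hm
    rw [EReal.top_add_of_ne_bot (by exact_mod_cast EReal.coe_ne_bot _)] at hm
    have hlt : f z₀ + (((1 : ℝ)/2 * ‖z₀ - x‖ ^ 2 : ℝ) : EReal) < ⊤ :=
      EReal.add_lt_top hz₀ (EReal.coe_ne_top _)
    exact absurd hm (not_le.2 hlt)
  set fu : ℝ := (f u).toReal with hfu_def
  have hfu : f u = (fu : EReal) := (EReal.coe_toReal hfu_ne_top (hnotbot u)).symm
  -- subgradient inequality: x - u ∈ ∂f(u)
  have key : ∀ z, f z ≠ ⊤ →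
      fu ≤ (f z).toReal + inner ℝ (u - x) (z - u) := by
    intro z hz
    set fz : ℝ := (f z).toReal with hfz_def
    have hfz : f z = (fz : EReal) := (EReal.coe_toReal hz (hnotbot z)).symm
    set B : ℝ := ‖z - u‖ ^ 2 with hB
    have hB0 : 0 ≤ B := by positivity
    set ip : ℝ := inner ℝ (u - x) (z - u) with hip
    have h1 : ∀ t : ℝ, 0 < t → t < 1 → fu ≤ fz + ip + t / 2 * B := by
      intro t ht ht1
      have hc := hconv u z (1 - t) t (by linarith) ht.le (by ring)
      have hm := hu_min ((1 - t) • u + t • z)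
      have hcomb := le_trans hm (add_le_add_left hc _)
      rw [hfu, hfz] at hcomb
      have hcast : (((1 - t : ℝ) : EReal) * (fu : EReal) + ((t : ℝ) : EReal) * (fz : EReal)
          + (((1 : ℝ)/2 * ‖(1 - t) • u + t • z - x‖ ^ 2 : ℝ) : EReal))
          = (((1 - t) * fu + t * fz + (1 : ℝ)/2 * ‖(1 - t) • u + t • z - x‖ ^ 2 : ℝ) : EReal) := by
        push_cast
        ring
      rw [hcast, ← EReal.coe_add, EReal.coe_le_coe_iff] at hcomb
      -- expand the norm
      have hyt : (1 - t) • u + t • z - x = (u - x) + t • (z - u) := by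
        module
      have hnorm : ‖(1 - t) • u + t • z - x‖ ^ 2
          = ‖u - x‖ ^ 2 + 2 * (t * ip) + t ^ 2 * B := by
        rw [hyt, norm_add_sq_real, real_inner_smul_right, norm_smul]
        rw [Real.norm_eq_abs, abs_of_pos ht]
        rw [hB, hip]
        ring
      rw [hnorm] at hcomb
      nlinarith [hcomb, ht, sq_nonneg t]
    -- take t → 0
    by_contra hnot
    push_neg at hnot
    set ε : ℝ := fu - (fz + ip) with hε
    have hε0 : 0 < ε := by simp only [hε]; linarith
    set t : ℝ := min (1/2) (ε / (B + 1)) with htdef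
    have ht0 : 0 < t := lt_min (by norm_num) (div_pos hε0 (by linarith))
    have ht1 : t < 1 := lt_of_le_of_lt (min_le_left _ _) (by norm_num)
    have := h1 t ht0 ht1
    have htB : t * B ≤ ε / (B + 1) * B := by
      apply mul_le_mul_of_nonneg_right (min_le_right _ _) hB0
    have hlt : ε / (B + 1) * B < ε := by
      rw [div_mul_eq_mul_div, div_lt_iff₀ (by linarith)]
      nlinarith
    simp only [hε] at this htB hlt
    linarith
  -- the candidate minimizer for the conjugate problem
  set w : EuclideanSpace ℝ (Fin n) := x - u with hw
  have hconj_ge : ∀ y : EuclideanSpace ℝ (Fin n),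
      (((inner ℝ y u : ℝ) - fu : ℝ) : EReal) ≤ fenchelConj f y := by
    intro y
    have h := le_iSup (fun z => ((inner ℝ y z : ℝ) : EReal) - f z) u
    rw [hfu, ← EReal.coe_sub] at h
    exact h
  have hconj_eq : fenchelConj f w = (((inner ℝ w u : ℝ) - fu : ℝ) : EReal) := by
    refine le_antisymm ?_ (hconj_ge w)
    apply iSup_le
    intro z
    by_cases hz : f z = ⊤
    · rw [hz]
      simp [EReal.sub_top]
    · have hfz : f z = (((f z).toReal : ℝ) : EReal) := (EReal.coe_toReal hz (hnotbot z)).symm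
      rw [hfz, ← EReal.coe_sub, EReal.coe_le_coe_iff]
      have hk := key z hz
      have hinner : (inner ℝ (u - x) (z - u) : ℝ) = - (inner ℝ w z : ℝ) + (inner ℝ w u : ℝ) := by
        rw [hw]
        rw [show u - x = -(x - u) from by abel, inner_neg_left, inner_sub_right]
        ring
      rw [hinner] at hk
      linarith
  -- w minimizes the conjugate prox objective
  have hw_min : ∀ y, fenchelConj f w + (((1 : ℝ)/2 * ‖w - x‖ ^ 2 : ℝ) : EReal)
      ≤ fenchelConj f y + (((1 : ℝ)/2 * ‖y - x‖ ^ 2 : ℝ) : EReal) := by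
    intro y
    refine le_trans ?_ (add_le_add_left (hconj_ge y) _)
    rw [hconj_eq, ← EReal.coe_add, ← EReal.coe_add, EReal.coe_le_coe_iff]
    have hwx : ‖w - x‖ = ‖u‖ := by
      rw [show w - x = -u from by rw [hw]; abel, norm_neg]
    rw [hwx]
    have hiw : (inner ℝ w u : ℝ) = (inner ℝ x u : ℝ) - ‖u‖ ^ 2 := by
      rw [hw, inner_sub_left, real_inner_self_eq_norm_sq]
    have hiy : (inner ℝ y u : ℝ) = (inner ℝ x u : ℝ) + (inner ℝ (y - x) u : ℝ) := by
      rw [inner_sub_left]; ring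
    have hexp := norm_add_sq_real (y - x) u
    nlinarith [sq_nonneg ‖y - x + u‖, hexp]
  have hwv : w = v := hv_unique w hw_min
  rw [← hwv, hw]
  abel
end

section
/- Let a, b > 0 and A, B₁, B₂ ∈ ℝ^{n×n} be such that H₁ = A + √(ab) B₁ and H₂ = A + √(ab) B₂ are invertible. Then the block matrix 𝔅 = [[A, −b B₂], [a B₁, A + √(ab)(B₁ + B₂)]] is invertible and its inverse is [[H₁⁻¹ + H₂⁻¹ − H₂⁻¹ A H₁⁻¹, √(b/a)(I − H₂⁻¹ A) H₁⁻¹], [−√(a/b) H₂⁻¹ (I − A H₁⁻¹), H₂⁻¹ A H₁⁻¹]]. -/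
open Matrix

/-- Explicit inverse of the preconditioner block matrix
`𝔅 = [[A, −b B₂], [a B₁, A + √(ab)(B₁+B₂)]]` when `H₁ = A + √(ab) B₁` and
`H₂ = A + √(ab) B₂` are invertible. -/
theorem preconditioner_block_inverse {n : ℕ} (a b : ℝ) (ha : 0 < a) (hb : 0 < b)
    (A B₁ B₂ : Matrix (Fin n) (Fin n) ℝ)
    (hH₁ : IsUnit (A + Real.sqrt (a*b) • B₁))
    (hH₂ : IsUnit (A + Real.sqrt (a*b) • B₂)) :
    IsUnit (fromBlocks A (-(b • B₂)) (a • B₁) (A + Real.sqrt (a*b) • (B₁ + B₂))) ∧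
    (fromBlocks A (-(b • B₂)) (a • B₁) (A + Real.sqrt (a*b) • (B₁ + B₂)))⁻¹ =
      fromBlocks
        ((A + Real.sqrt (a*b) • B₁)⁻¹ + (A + Real.sqrt (a*b) • B₂)⁻¹
          - (A + Real.sqrt (a*b) • B₂)⁻¹ * A * (A + Real.sqrt (a*b) • B₁)⁻¹)
        (Real.sqrt (b/a) • ((1 - (A + Real.sqrt (a*b) • B₂)⁻¹ * A) * (A + Real.sqrt (a*b) • B₁)⁻¹))
        (-(Real.sqrt (a/b) • ((A + Real.sqrt (a*b) • B₂)⁻¹ * (1 - A * (A + Real.sqrt (a*b) • B₁)⁻¹))))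
        ((A + Real.sqrt (a*b) • B₂)⁻¹ * A * (A + Real.sqrt (a*b) • B₁)⁻¹) := by
  have hb0 : (b : ℝ) ≠ 0 := hb.ne'
  have ha0 : (a : ℝ) ≠ 0 := ha.ne'
  set s := Real.sqrt (a*b) with hsdef
  have hs : s * s = a * b := Real.mul_self_sqrt (by positivity)
  have hab : Real.sqrt (a/b) = s / b := by
    rw [show a/b = (a*b)/b^2 by field_simp, Real.sqrt_div (by positivity),
      Real.sqrt_sq hb.le]
  have hba : Real.sqrt (b/a) = s / a := by
    rw [show b/a = (a*b)/a^2 by field_simp, Real.sqrt_div (by positivity),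
      Real.sqrt_sq ha.le]
  rw [hab, hba]
  set H₁ := A + s • B₁ with hH1def
  set H₂ := A + s • B₂ with hH2def
  set K₁ := H₁⁻¹ with hK1def
  set K₂ := H₂⁻¹ with hK2def
  have e1 : H₁ * K₁ = 1 := mul_nonsing_inv _ ((isUnit_iff_isUnit_det _).mp hH₁)
  have e2 : H₂ * K₂ = 1 := mul_nonsing_inv _ ((isUnit_iff_isUnit_det _).mp hH₂)
  have key : fromBlocks A (-(b • B₂)) (a • B₁) (A + s • (B₁ + B₂)) *
      fromBlocks (K₁ + K₂ - K₂ * A * K₁) ((s/a) • ((1 - K₂ * A) * K₁))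
        (-((s/b) • (K₂ * (1 - A * K₁)))) (K₂ * A * K₁) = 1 := by
    rw [fromBlocks_multiply, ← fromBlocks_one, fromBlocks_inj]
    refine ⟨?_, ?_, ?_, ?_⟩
    · -- top-left
      have h : A * K₁ + H₂ * (K₂ * (1 - A * K₁)) = 1 := by
        rw [← mul_assoc, e2, one_mul]; abel
      calc A * (K₁ + K₂ - K₂ * A * K₁) + -(b • B₂) * -((s/b) • (K₂ * (1 - A * K₁)))
          = A * K₁ + H₂ * (K₂ * (1 - A * K₁)) := by
            rw [hH2def]
            simp only [mul_add, add_mul, mul_sub, sub_mul, smul_mul_assoc, mul_smul_comm,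
              smul_smul, mul_one, one_mul, neg_mul, mul_neg, neg_neg, smul_sub, smul_add,
              mul_assoc]
            match_scalars <;> field_simp
        _ = 1 := h
    · -- top-right
      have h : (s/a) • (A * K₁) - (s/a) • (H₂ * (K₂ * (A * K₁))) = 0 := by
        rw [← mul_assoc, e2, one_mul, sub_self]
      calc A * ((s/a) • ((1 - K₂ * A) * K₁)) + -(b • B₂) * (K₂ * A * K₁)
          = (s/a) • (A * K₁) - (s/a) • (H₂ * (K₂ * (A * K₁))) := by
            rw [hH2def]
            simp only [mul_add, add_mul, mul_sub, sub_mul, smul_mul_assoc, mul_smul_comm,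
              smul_smul, mul_one, one_mul, neg_mul, mul_neg, neg_neg, smul_sub, smul_add,
              mul_assoc]
            match_scalars <;> (field_simp; try linarith [hs])
        _ = 0 := h
    · -- bottom-left
      have h : (s/b) • (H₁ * K₁) - (s/b) • (H₂ * (K₂ * (1 - A * K₁))) - (s/b) • (A * K₁) = 0 := by
        rw [e1, ← mul_assoc, e2, one_mul, smul_sub]; abel
      calc a • B₁ * (K₁ + K₂ - K₂ * A * K₁) +
            (A + s • (B₁ + B₂)) * -((s/b) • (K₂ * (1 - A * K₁)))
          = (s/b) • (H₁ * K₁) - (s/b) • (H₂ * (K₂ * (1 - A * K₁))) - (s/b) • (A * K₁) := by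
            rw [hH1def, hH2def]
            simp only [mul_add, add_mul, mul_sub, sub_mul, smul_mul_assoc, mul_smul_comm,
              smul_smul, mul_one, one_mul, neg_mul, mul_neg, neg_neg, smul_sub, smul_add,
              mul_assoc]
            match_scalars <;> (field_simp; try linarith [hs])
        _ = 0 := h
    · -- bottom-right
      have h : s • (B₁ * K₁) + H₂ * (K₂ * (A * K₁)) = 1 := by
        rw [← mul_assoc, e2, one_mul, ← smul_mul_assoc]
        calc s • B₁ * K₁ + A * K₁ = (A + s • B₁) * K₁ := by rw [add_mul]; abel
          _ = 1 := e1
      calc a • B₁ * ((s/a) • ((1 - K₂ * A) * K₁)) + (A + s • (B₁ + B₂)) * (K₂ * A * K₁)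
          = s • (B₁ * K₁) + H₂ * (K₂ * (A * K₁)) := by
            rw [hH2def]
            simp only [mul_add, add_mul, mul_sub, sub_mul, smul_mul_assoc, mul_smul_comm,
              smul_smul, mul_one, one_mul, neg_mul, mul_neg, neg_neg, smul_sub, smul_add,
              mul_assoc]
            match_scalars <;> (field_simp; try linarith [hs])
        _ = 1 := h
  exact ⟨⟨⟨_, _, key, mul_eq_one_comm.mp key⟩, rfl⟩, inv_eq_right_inv key⟩
end

section
/- Let M, K ∈ ℝ^{n×n}, α > 0, and suppose Q = M + √α K is invertible. Given r₁, r₂ ∈ ℝ^n, let g = Q⁻¹(r₁ + √α r₂), h = Q⁻¹(r₁ − M g), v₁ = g + h, and v₂ = −(1/√α) h. Then M v₁ − α K v₂ = r₁ and K v₁ + (M + 2√α K) v₂ = r₂; that is, (v₁, v₂) solves the preconditioner system 𝔅 v = r with 𝔅 = [[M, −α K], [K, M + 2√α K]]. -/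
open Matrix

/-- Solving the factorized preconditioner system: with `Q = M + √α K` invertible,
`g = Q⁻¹(r₁ + √α r₂)`, `h = Q⁻¹(r₁ − M g)`, `v₁ = g + h`, `v₂ = −(1/√α) h`, the pair
`(v₁, v₂)` solves `𝔅 v = r` where `𝔅 = [[M, −α K], [K, M + 2√α K]]`. -/
theorem factorized_operator_solves_preconditioner {n : ℕ}
    (M K : Matrix (Fin n) (Fin n) ℝ) (α : ℝ) (hα : 0 < α)
    (hQ : IsUnit (M + Real.sqrt α • K))
    (r₁ r₂ g h v₁ v₂ : Fin n → ℝ)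
    (hg : g = (M + Real.sqrt α • K)⁻¹ *ᵥ (r₁ + Real.sqrt α • r₂))
    (hh : h = (M + Real.sqrt α • K)⁻¹ *ᵥ (r₁ - M *ᵥ g))
    (hv₁ : v₁ = g + h)
    (hv₂ : v₂ = -(1 / Real.sqrt α) • h) :
    M *ᵥ v₁ - α • (K *ᵥ v₂) = r₁ ∧
    K *ᵥ v₁ + (M + (2 * Real.sqrt α) • K) *ᵥ v₂ = r₂ := by
  set s := Real.sqrt α with hs
  have hspos : 0 < s := Real.sqrt_pos.2 hα
  have hsne : s ≠ 0 := ne_of_gt hspos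
  have hs2 : s * s = α := Real.mul_self_sqrt hα.le
  have hdet : IsUnit (M + s • K).det := (Matrix.isUnit_iff_isUnit_det _).1 hQ
  have hQg : (M + s • K) *ᵥ g = r₁ + s • r₂ := by
    rw [hg, mulVec_mulVec, Matrix.mul_nonsing_inv _ hdet, one_mulVec]
  have hQh : (M + s • K) *ᵥ h = r₁ - M *ᵥ g := by
    rw [hh, mulVec_mulVec, Matrix.mul_nonsing_inv _ hdet, one_mulVec]
  rw [Matrix.add_mulVec, Matrix.smul_mulVec] at hQg hQh
  subst hv₁ hv₂
  constructor
  · rw [Matrix.mulVec_add, Matrix.mulVec_smul]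
    have h1 : M *ᵥ h = r₁ - M *ᵥ g - s • (K *ᵥ h) := by
      rw [← hQh]; abel
    rw [h1, ← hs2]
    match_scalars <;> field_simp [← hs2] <;> ring
  · rw [Matrix.mulVec_add, Matrix.add_mulVec, Matrix.mulVec_smul, Matrix.mulVec_smul,
      Matrix.smul_mulVec]
    have h1 : M *ᵥ h = r₁ - M *ᵥ g - s • (K *ᵥ h) := by
      rw [← hQh]; abel
    have h2 : M *ᵥ g = r₁ + s • r₂ - s • (K *ᵥ g) := by
      rw [← hQg]; abel
    rw [h1, h2]
    match_scalars <;> field_simp [← hs2] <;> ring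
end

section
/- Let M ∈ ℝ^{n×n} be symmetric positive definite, K ∈ ℝ^{n×n} symmetric positive semidefinite, and α > 0. Define 𝔄 = [[M, −α K], [K, M]] and 𝔅 = [[M, −α K], [K, M + 2√α K]] as 2n×2n block matrices. Then 𝔅 is invertible and every eigenvalue of 𝔅⁻¹ 𝔄 is real and lies in the interval [1/2, 1]. -/
open Matrix ComplexOrder

private lemma map_psd {n : ℕ} {K : Matrix (Fin n) (Fin n) ℝ} (hK : K.PosSemidef) :
    (K.map ((↑) : ℝ → ℂ)).PosSemidef := by
  obtain ⟨B, rfl⟩ : ∃ B : Matrix (Fin n) (Fin n) ℝ, K = Bᴴ * B := by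
    open scoped MatrixOrder in
    obtain ⟨B, hB⟩ := CStarAlgebra.nonneg_iff_eq_star_mul_self.mp hK.nonneg
    exact ⟨B, hB⟩
  have h1 : (Bᴴ * B).map ((↑) : ℝ → ℂ)
      = (B.map ((↑) : ℝ → ℂ))ᴴ * B.map ((↑) : ℝ → ℂ) := by
    rw [show ((↑) : ℝ → ℂ) = ⇑Complex.ofRealHom from rfl, Matrix.map_mul,
      ← Matrix.conjTranspose_map]
    intro a
    simp
  rw [h1]
  exact posSemidef_conjTranspose_mul_self _

private lemma map_herm {n : ℕ} {A : Matrix (Fin n) (Fin n) ℝ} (hA : A.IsHermitian) :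
    (A.map ((↑) : ℝ → ℂ)).IsHermitian := by
  have h := Matrix.conjTranspose_map (A := A) ((↑) : ℝ → ℂ) (fun a => by simp)
  unfold Matrix.IsHermitian at *
  rw [← h, hA]

private lemma herm_pair {n : ℕ} {A : Matrix (Fin n) (Fin n) ℂ} (hA : A.IsHermitian)
    (x y : Fin n → ℂ) : star x ⬝ᵥ (A *ᵥ y) = star (A *ᵥ x) ⬝ᵥ y := by
  rw [star_mulVec, dotProduct_mulVec, hA.eq]

private lemma map_pd_inj {n : ℕ} {M : Matrix (Fin n) (Fin n) ℝ} (hM : M.PosDef)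
    (x : Fin n → ℂ) (hx : (M.map ((↑) : ℝ → ℂ)) *ᵥ x = 0) : x = 0 := by
  by_contra h
  have hdet : (M.map ((↑) : ℝ → ℂ)).det = 0 :=
    Matrix.exists_mulVec_eq_zero_iff.mp ⟨x, h, hx⟩
  have : (M.map ((↑) : ℝ → ℂ)).det = (M.det : ℂ) := by
    rw [show (M.map ((↑) : ℝ → ℂ)) = Complex.ofRealHom.mapMatrix M from rfl,
      ← RingHom.map_det]; rfl
  rw [this] at hdet
  have := hM.det_pos
  simp only [Complex.ofReal_eq_zero] at hdet
  linarith

private lemma cnonneg {z : ℂ} (h : 0 ≤ z) : z = (z.re : ℂ) ∧ 0 ≤ z.re := by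
  rw [Complex.le_def] at h
  refine ⟨Complex.ext rfl ?_, h.1⟩
  simpa using h.2.symm

private lemma Bunit {n : ℕ} (M K : Matrix (Fin n) (Fin n) ℝ) (hM : M.PosDef)
    (hK : K.PosSemidef) (α : ℝ) (hα : 0 < α) :
    IsUnit (fromBlocks M (-(α • K)) K (M + (2 * Real.sqrt α) • K)) := by
  classical
  rw [Matrix.isUnit_iff_isUnit_det, isUnit_iff_ne_zero]
  intro hdet
  obtain ⟨v, hv0, hv⟩ := Matrix.exists_mulVec_eq_zero_iff.mpr hdet
  set x : Fin n → ℝ := v ∘ Sum.inl with hx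
  set y : Fin n → ℝ := v ∘ Sum.inr with hy
  rw [fromBlocks_mulVec] at hv
  have e1 : M *ᵥ x = α • (K *ᵥ y) := by
    have h1 : M *ᵥ x + (-(α • K)) *ᵥ y = 0 := funext fun i => congrFun hv (Sum.inl i)
    rw [neg_mulVec, smul_mulVec] at h1
    linear_combination (norm := module) h1
  have e2 : K *ᵥ x + M *ᵥ y + (2 * Real.sqrt α) • (K *ᵥ y) = 0 := by
    have h2 : K *ᵥ x + (M + (2 * Real.sqrt α) • K) *ᵥ y = 0 :=
      funext fun i => congrFun hv (Sum.inr i)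
    rw [add_mulVec, smul_mulVec] at h2
    linear_combination (norm := module) h2
  set a := x ⬝ᵥ K *ᵥ x with hadef
  set b := y ⬝ᵥ K *ᵥ y with hbdef
  set c := x ⬝ᵥ K *ᵥ y with hcdef
  set m := x ⬝ᵥ M *ᵥ x with hmdef
  have ha : 0 ≤ a := by simpa using hK.dotProduct_mulVec_nonneg x
  have hb : 0 ≤ b := by simpa using hK.dotProduct_mulVec_nonneg y
  have hm : 0 ≤ m := by simpa using hM.posSemidef.dotProduct_mulVec_nonneg x
  have hmc : m = α * c := by
    rw [hmdef, e1, dotProduct_smul, hcdef]; rfl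
  have hc : 0 ≤ c := nonneg_of_mul_nonneg_right (by rw [← hmc]; exact hm) hα
  have hMy : x ⬝ᵥ M *ᵥ y = α * b := by
    have hMsym : Mᵀ = M := by
      have := hM.1; rwa [Matrix.IsHermitian, conjTranspose_eq_transpose_of_trivial] at this
    rw [Matrix.dotProduct_mulVec, ← Matrix.mulVec_transpose, hMsym, e1,
      smul_dotProduct, dotProduct_comm, hbdef]
    rfl
  have key : a + α * b + 2 * Real.sqrt α * c = 0 := by
    have := congrArg (fun w => x ⬝ᵥ w) e2
    simpa [dotProduct_add, dotProduct_smul, hMy, smul_eq_mul, mul_comm, mul_assoc,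
      mul_left_comm] using this
  have hsa : 0 < Real.sqrt α := Real.sqrt_pos.mpr hα
  have ha0 : a = 0 := by nlinarith
  have hb0 : b = 0 := by nlinarith
  have hc0 : c = 0 := by nlinarith
  have hx0 : x = 0 := by
    by_contra h
    have := hM.dotProduct_mulVec_pos h
    simp only [star_trivial, ← hmdef] at this
    rw [hmc, hc0, mul_zero] at this
    exact lt_irrefl 0 this
  have hKy : K *ᵥ y = 0 := by
    have := (hK.dotProduct_mulVec_zero_iff y).mp (by simpa [← hbdef] using hb0)
    exact this
  have hy0 : y = 0 := by
    by_contra h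
    have hMy0 : M *ᵥ y = 0 := by
      have := e2
      rw [hx0, mulVec_zero, hKy, smul_zero] at this
      simpa using this
    have := hM.dotProduct_mulVec_pos h
    rw [star_trivial, hMy0, dotProduct_zero] at this
    exact lt_irrefl 0 this
  apply hv0
  funext i
  cases i with
  | inl i => exact congrFun hx0 i
  | inr i => exact congrFun hy0 i

/-- For `M` symmetric positive definite, `K` symmetric positive semidefinite and `α > 0`,
the preconditioner `𝔅 = [[M, −αK], [K, M + 2√α K]]` is invertible and every eigenvalue of
`𝔅⁻¹𝔄`, where `𝔄 = [[M, −αK], [K, M]]`, is real and lies in `[1/2, 1]`. -/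
theorem preconditioned_matrix_eigenvalues {n : ℕ}
    (M K : Matrix (Fin n) (Fin n) ℝ) (hM : M.PosDef) (hK : K.PosSemidef)
    (α : ℝ) (hα : 0 < α) :
    IsUnit (fromBlocks M (-(α • K)) K (M + (2 * Real.sqrt α) • K)) ∧
    ∀ (μ : ℂ) (v : (Fin n ⊕ Fin n) → ℂ), v ≠ 0 →
      (((fromBlocks M (-(α • K)) K (M + (2 * Real.sqrt α) • K))⁻¹
          * fromBlocks M (-(α • K)) K M).map ((↑) : ℝ → ℂ)) *ᵥ v = μ • v →
      μ.im = 0 ∧ (1 : ℝ)/2 ≤ μ.re ∧ μ.re ≤ 1 := by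
  classical
  have hBu := Bunit M K hM hK α hα
  refine ⟨hBu, ?_⟩
  intro μ v hv0 hv
  set co : ℝ → ℂ := ((↑) : ℝ → ℂ) with hco
  set B := fromBlocks M (-(α • K)) K (M + (2 * Real.sqrt α) • K) with hBdef
  set A := fromBlocks M (-(α • K)) K M with hAdef
  set Mc := M.map co with hMc
  set Kc := K.map co with hKc
  -- Step 1 : A.map co *ᵥ v = μ • (B.map co *ᵥ v)
  have hBdet : IsUnit B.det := (Matrix.isUnit_iff_isUnit_det B).mp hBu
  have hBA : B * (B⁻¹ * A) = A := by
    rw [← Matrix.mul_assoc, Matrix.mul_nonsing_inv B hBdet, Matrix.one_mul]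
  have hmap : A.map co = B.map co * (B⁻¹ * A).map co := by
    conv_lhs => rw [← hBA]
    rw [show co = ⇑Complex.ofRealHom from rfl, Matrix.map_mul]
  have step1 : A.map co *ᵥ v = μ • (B.map co *ᵥ v) := by
    rw [hmap, ← Matrix.mulVec_mulVec, hv, Matrix.mulVec_smul]
  -- block form
  set x : Fin n → ℂ := v ∘ Sum.inl with hx
  set y : Fin n → ℂ := v ∘ Sum.inr with hy
  have hmapN : (-(α • K)).map co = -((α : ℂ) • Kc) := by
    ext i j; simp [hKc, Matrix.map_apply, hco]
  have hmapD : (M + (2 * Real.sqrt α) • K).map co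
      = Mc + ((2 * Real.sqrt α : ℝ) : ℂ) • Kc := by
    ext i j; simp [hMc, hKc, Matrix.map_apply, hco]
  have hAblocks : A.map co = fromBlocks Mc (-((α : ℂ) • Kc)) Kc Mc := by
    rw [hAdef, fromBlocks_map, hmapN]
  have hBblocks : B.map co
      = fromBlocks Mc (-((α : ℂ) • Kc)) Kc (Mc + ((2 * Real.sqrt α : ℝ) : ℂ) • Kc) := by
    rw [hBdef, fromBlocks_map, hmapN, hmapD]
  rw [hAblocks, hBblocks, fromBlocks_mulVec, fromBlocks_mulVec] at step1
  have e1 : Mc *ᵥ x + (-((α : ℂ) • Kc)) *ᵥ y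
      = μ • (Mc *ᵥ x + (-((α : ℂ) • Kc)) *ᵥ y) := by
    funext i; exact congrFun step1 (Sum.inl i)
  have e2 : Kc *ᵥ x + Mc *ᵥ y
      = μ • (Kc *ᵥ x + (Mc + ((2 * Real.sqrt α : ℝ) : ℂ) • Kc) *ᵥ y) := by
    funext i; exact congrFun step1 (Sum.inr i)
  by_cases hμ1 : μ = 1
  · subst hμ1; norm_num
  -- μ ≠ 1 : top row gives Mc x = α • Kc y
  have e1' : Mc *ᵥ x = (α : ℂ) • (Kc *ᵥ y) := by
    have h := sub_eq_zero.mpr e1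
    have hw : ((1:ℂ) - μ) • (Mc *ᵥ x + -((α : ℂ) • Kc) *ᵥ y) = 0 := by
      rw [sub_smul, one_smul]; exact h
    have h1μ : (1:ℂ) - μ ≠ 0 := sub_ne_zero.mpr (fun h' => hμ1 h'.symm)
    have hw0 := (smul_eq_zero.mp hw).resolve_left h1μ
    rw [neg_mulVec, smul_mulVec] at hw0
    linear_combination (norm := module) hw0
  -- scalar quantities
  have hKcp : Kc.PosSemidef := map_psd hK
  have hMcp : Mc.PosSemidef := map_psd hM.posSemidef
  have hMch : Mc.IsHermitian := map_herm hM.1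
  have hnn_a := cnonneg (hKcp.dotProduct_mulVec_nonneg x)
  have hnn_b := cnonneg (hKcp.dotProduct_mulVec_nonneg y)
  have hnn_m := cnonneg (hMcp.dotProduct_mulVec_nonneg x)
  set a' := star x ⬝ᵥ Kc *ᵥ x with ha'
  set b' := star y ⬝ᵥ Kc *ᵥ y with hb'
  set c' := star x ⬝ᵥ Kc *ᵥ y with hc'
  set m' := star x ⬝ᵥ Mc *ᵥ x with hm'
  obtain ⟨haeq, hage⟩ := hnn_a
  obtain ⟨hbeq, hbge⟩ := hnn_b
  obtain ⟨hmeq, hmge⟩ := hnn_m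
  have hmc : m' = (α : ℂ) * c' := by
    rw [hm', e1', dotProduct_smul, hc', smul_eq_mul]
  set A0 := a'.re with hA0
  set B0 := b'.re with hB0
  set C0 := m'.re / α with hC0
  have hCge : 0 ≤ C0 := div_nonneg hmge hα.le
  have hceq : c' = (C0 : ℂ) := by
    have hα0 : (α : ℂ) ≠ 0 := by exact_mod_cast hα.ne'
    rw [hC0]
    push_cast
    rw [← hmeq, hmc]
    field_simp
  -- star x ⬝ᵥ Mc y = α * b'
  have hMy : star x ⬝ᵥ Mc *ᵥ y = (α : ℂ) * b' := by
    rw [herm_pair hMch, e1', star_smul, smul_dotProduct,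
      ← herm_pair hKcp.1, ← hb']
    simp [Complex.star_def, Complex.conj_ofReal, smul_eq_mul]
  -- conjugate symmetry: star y ⬝ᵥ Kc x = c'
  have hyx : star y ⬝ᵥ Kc *ᵥ x = c' := by
    have h1 : star y ⬝ᵥ Kc *ᵥ x = star (star x ⬝ᵥ Kc *ᵥ y) := by
      rw [herm_pair hKcp.1, star_dotProduct]
    rw [h1, ← hc', hceq]
    simp [Complex.star_def, Complex.conj_ofReal]
  -- Cauchy-type inequality: 2√α C0 ≤ A0 + α B0
  have hCS : 2 * Real.sqrt α * C0 ≤ A0 + α * B0 := by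
    set w : Fin n → ℂ := x - ((Real.sqrt α : ℝ) : ℂ) • y with hwdef
    have hpos := hKcp.dotProduct_mulVec_nonneg w
    have hexp : star w ⬝ᵥ Kc *ᵥ w
        = ((A0 + α * B0 - 2 * Real.sqrt α * C0 : ℝ) : ℂ) := by
      rw [hwdef]
      rw [star_sub, star_smul, mulVec_sub, mulVec_smul]
      rw [sub_dotProduct, dotProduct_sub, dotProduct_sub, smul_dotProduct,
        dotProduct_smul, dotProduct_smul]
      simp only [Complex.star_def, Complex.conj_ofReal, smul_eq_mul]
      simp only [← ha', ← hb', ← hc']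
      simp only [smul_dotProduct, smul_eq_mul]
      simp only [← hb']
      rw [hyx, haeq, hbeq, hceq]
      have hsq : ((Real.sqrt α : ℝ) : ℂ) * ((Real.sqrt α : ℝ) : ℂ)
          = ((α : ℝ) : ℂ) := by
        rw [← Complex.ofReal_mul, Real.mul_self_sqrt hα.le]
      push_cast
      linear_combination (B0 : ℂ) * hsq
    rw [hexp] at hpos
    have := Complex.zero_le_real.mp hpos
    linarith
  -- scalar eigen-equation
  have E : (A0 : ℂ) + (α : ℂ) * (B0 : ℂ)
      = μ * ((A0 : ℂ) + (α : ℂ) * (B0 : ℂ) + ((2 * Real.sqrt α : ℝ) : ℂ) * (C0 : ℂ)) := by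
    have h := congrArg (fun u => star x ⬝ᵥ u) e2
    simp only [dotProduct_add, dotProduct_smul, add_mulVec, smul_mulVec,
      smul_eq_mul] at h
    simp only [← ha', ← hc'] at h
    rw [hMy, haeq, hbeq, hceq] at h
    linear_combination h
  set S := A0 + α * B0 with hS
  set D := S + 2 * Real.sqrt α * C0 with hD
  have hsa : 0 < Real.sqrt α := Real.sqrt_pos.mpr hα
  have hSge : 0 ≤ S := by
    rw [hS]; exact add_nonneg hage (mul_nonneg hα.le hbge)
  have hDgeS : S ≤ D := by
    rw [hD]
    exact le_add_of_nonneg_right (mul_nonneg (mul_nonneg (by norm_num) hsa.le) hCge)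
  have hD2S : D ≤ 2 * S := by rw [hD]; linarith [hCS]
  have hDge0 : 0 ≤ D := le_trans hSge hDgeS
  have E' : (S : ℂ) = μ * (D : ℂ) := by
    rw [hS, hD, hS]
    push_cast at E ⊢
    linear_combination E
  by_cases hDzero : D = 0
  · -- degenerate case: v must vanish, contradiction
    exfalso
    have hS0 : S = 0 := le_antisymm (hDzero ▸ hDgeS) hSge
    have h1 : S + 2 * Real.sqrt α * C0 = 0 := by rw [← hD]; exact hDzero
    have hC0z : C0 = 0 := by
      have h2 : 2 * Real.sqrt α * C0 = 0 := by linarith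
      have h3 : 2 * Real.sqrt α ≠ 0 := by positivity
      exact (mul_eq_zero.mp h2).resolve_left h3
    have h4 : A0 + α * B0 = 0 := by rw [← hS]; exact hS0
    have hBnn : 0 ≤ α * B0 := mul_nonneg hα.le hbge
    have hA0z : A0 = 0 := by linarith
    have hB0z : B0 = 0 := by
      have h5 : α * B0 = 0 := by linarith
      exact (mul_eq_zero.mp h5).resolve_left hα.ne'
    have hmz : m' = 0 := by
      rw [hmeq]
      have : m'.re = α * C0 := by rw [hC0]; field_simp
      rw [this, hC0z, mul_zero, Complex.ofReal_zero]
    have hx0 : x = 0 := by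
      apply map_pd_inj hM
      exact (hMcp.dotProduct_mulVec_zero_iff x).mp (by rw [← hm']; exact hmz)
    have hKy : Kc *ᵥ y = 0 := by
      apply (hKcp.dotProduct_mulVec_zero_iff y).mp
      rw [← hb', hbeq, hB0z, Complex.ofReal_zero]
    have hMyz : Mc *ᵥ y = 0 := by
      have h2 := e2
      rw [hx0, mulVec_zero, add_mulVec, smul_mulVec, hKy, smul_zero] at h2
      simp only [zero_add, add_zero] at h2
      have hw : ((1:ℂ) - μ) • (Mc *ᵥ y) = 0 := by
        rw [sub_smul, one_smul]
        nth_rewrite 1 [h2]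
        exact sub_self _
      have h1μ : (1:ℂ) - μ ≠ 0 := sub_ne_zero.mpr (fun h' => hμ1 h'.symm)
      exact (smul_eq_zero.mp hw).resolve_left h1μ
    have hy0 : y = 0 := map_pd_inj hM y hMyz
    apply hv0
    funext i
    cases i with
    | inl i => exact congrFun hx0 i
    | inr i => exact congrFun hy0 i
  · have hDpos : 0 < D := lt_of_le_of_ne hDge0 (Ne.symm hDzero)
    rw [Complex.ext_iff] at E'
    simp only [Complex.ofReal_re, Complex.ofReal_im, Complex.mul_re, Complex.mul_im] at E'
    obtain ⟨Ere, Eim⟩ := E'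
    have him : μ.im = 0 := by
      have h6 : μ.im * D = 0 := by linarith
      exact (mul_eq_zero.mp h6).resolve_right hDzero
    have hre : μ.re * D = S := by rw [him] at Ere; linarith
    refine ⟨him, ?_, ?_⟩
    · have h7 : 1 / 2 * D ≤ μ.re * D := by rw [hre]; linarith
      exact le_of_mul_le_mul_right h7 hDpos
    · have h8 : μ.re * D ≤ 1 * D := by rw [hre, one_mul]; exact hDgeS
      exact le_of_mul_le_mul_right h8 hDpos
end

section
/- Weak duality between the discretized problem and its dual: let M ∈ ℝ^{n×n} be symmetric positive definite, K ∈ ℝ^{n×n}, α > 0, y_d, f ∈ ℝ^n, and let C, S ⊆ ℝ^n be nonempty closed convex sets. For every (y, u) ∈ ℝ^n × ℝ^n satisfying K y = M u + M f, y ∈ C and u ∈ S, and for every (p, λ, μ) ∈ ℝ^n × ℝ^n × ℝ^n, it holds that (1/2)(y − y_d)ᵀ M (y − y_d) + (α/2) uᵀ M u ≥ −F(p, λ, μ), where F(p, λ, μ) = (1/2)(Kᵀ p + λ − M y_d)ᵀ M⁻¹ (Kᵀ p + λ − M y_d) + (1/(2α))(M p − μ)ᵀ M⁻¹ (M p − μ)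 + δ*_C(λ) + δ*_S(μ) + ⟨M f, p⟩ − (1/2) y_dᵀ M y_d. -/
open Matrix

/-- The support function `δ*_B(lam) = sup_{z ∈ B} ⟨lam, z⟩` of a set `B ⊆ ℝ^n`,
with values in `EReal`. -/
noncomputable def suppFn {n : ℕ} (B : Set (Fin n → ℝ)) (lam : Fin n → ℝ) : EReal :=
  ⨆ z : B, ((lam ⬝ᵥ (z : Fin n → ℝ) : ℝ) : EReal)

section Aux
variable {n : ℕ} (M : Matrix (Fin n) (Fin n) ℝ)

private lemma symPair (hs : Mᵀ = M) (x z : Fin n → ℝ) : x ⬝ᵥ (M *ᵥ z) = z ⬝ᵥ (M *ᵥ x) := by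
  rw [Matrix.dotProduct_mulVec, ← Matrix.mulVec_transpose, hs, dotProduct_comm]

private lemma expandAdd (hs : Mᵀ = M) (x z : Fin n → ℝ) :
    (x + z) ⬝ᵥ (M *ᵥ (x + z)) = x ⬝ᵥ (M *ᵥ x) + 2 * (x ⬝ᵥ (M *ᵥ z)) + z ⬝ᵥ (M *ᵥ z) := by
  simp only [Matrix.mulVec_add, dotProduct_add, add_dotProduct]
  rw [symPair M hs z x]; ring

private lemma expandSub (hs : Mᵀ = M) (x z : Fin n → ℝ) :
    (x - z) ⬝ᵥ (M *ᵥ (x - z)) = x ⬝ᵥ (M *ᵥ x) - 2 * (x ⬝ᵥ (M *ᵥ z)) + z ⬝ᵥ (M *ᵥ z) := by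
  simp only [Matrix.mulVec_sub, dotProduct_sub, sub_dotProduct]
  rw [symPair M hs z x]; ring

private lemma expandSmulSub (hs : Mᵀ = M) (c : ℝ) (x z : Fin n → ℝ) :
    (c • x - z) ⬝ᵥ (M *ᵥ (c • x - z)) =
      c^2 * (x ⬝ᵥ (M *ᵥ x)) - 2 * c * (x ⬝ᵥ (M *ᵥ z)) + z ⬝ᵥ (M *ᵥ z) := by
  simp only [Matrix.mulVec_sub, Matrix.mulVec_smul, dotProduct_sub, sub_dotProduct,
    smul_dotProduct, dotProduct_smul, smul_eq_mul]
  rw [symPair M hs z x]; ring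

private lemma weak_duality_real {n : ℕ}
    (M K : Matrix (Fin n) (Fin n) ℝ) (hM : M.PosDef)
    (α : ℝ) (hα : 0 < α)
    (yd f : Fin n → ℝ)
    (y u : Fin n → ℝ)
    (hfeas : K *ᵥ y = M *ᵥ u + M *ᵥ f)
    (p lam mu : Fin n → ℝ) :
    -((1 : ℝ)/2 * ((Kᵀ *ᵥ p + lam - M *ᵥ yd) ⬝ᵥ (M⁻¹ *ᵥ (Kᵀ *ᵥ p + lam - M *ᵥ yd)))
        + (1 : ℝ)/(2*α) * ((M *ᵥ p - mu) ⬝ᵥ (M⁻¹ *ᵥ (M *ᵥ p - mu)))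
        + (M *ᵥ f) ⬝ᵥ p - (1 : ℝ)/2 * (yd ⬝ᵥ (M *ᵥ yd))
        + lam ⬝ᵥ y + mu ⬝ᵥ u)
    ≤ (1 : ℝ)/2 * ((y - yd) ⬝ᵥ (M *ᵥ (y - yd))) + α/2 * (u ⬝ᵥ (M *ᵥ u)) := by
  have hs : Mᵀ = M := hM.1.eq
  have hdet : IsUnit M.det := isUnit_iff_ne_zero.mpr hM.det_pos.ne'
  set a := Kᵀ *ᵥ p + lam - M *ᵥ yd with ha
  set b := M *ᵥ p - mu with hb
  set v := M⁻¹ *ᵥ a with hv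
  set w := M⁻¹ *ᵥ b with hw
  have hMv : M *ᵥ v = a := by
    rw [hv, Matrix.mulVec_mulVec, Matrix.mul_nonsing_inv _ hdet, Matrix.one_mulVec]
  have hMw : M *ᵥ w = b := by
    rw [hw, Matrix.mulVec_mulVec, Matrix.mul_nonsing_inv _ hdet, Matrix.one_mulVec]
  have hav : a ⬝ᵥ v = v ⬝ᵥ (M *ᵥ v) := by
    conv_lhs => rw [← hMv]
    rw [dotProduct_comm]
  have hbw : b ⬝ᵥ w = w ⬝ᵥ (M *ᵥ w) := by
    conv_lhs => rw [← hMw]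
    rw [dotProduct_comm]
  have hMf : M *ᵥ f = K *ᵥ y - M *ᵥ u := by rw [hfeas]; abel
  have hfp : (M *ᵥ f) ⬝ᵥ p = y ⬝ᵥ (Kᵀ *ᵥ p) - u ⬝ᵥ (M *ᵥ p) := by
    rw [hMf, sub_dotProduct, dotProduct_comm (K *ᵥ y) p, Matrix.dotProduct_mulVec,
      ← Matrix.mulVec_transpose, dotProduct_comm (M *ᵥ u) p, symPair M hs p u,
      dotProduct_comm (Kᵀ *ᵥ p) y]
  have h1 : (0:ℝ) ≤ y ⬝ᵥ (M *ᵥ y) + 2 * (y ⬝ᵥ a) + v ⬝ᵥ (M *ᵥ v) := by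
    have := hM.posSemidef.dotProduct_mulVec_nonneg (y + v)
    rw [show star (y+v) = y+v from rfl] at this
    rw [← hMv, ← expandAdd M hs]
    simpa using this
  have h2 : (0:ℝ) ≤ α^2 * (u ⬝ᵥ (M *ᵥ u)) - 2 * α * (u ⬝ᵥ b) + w ⬝ᵥ (M *ᵥ w) := by
    have := hM.posSemidef.dotProduct_mulVec_nonneg (α • u - w)
    rw [show star (α • u - w) = α • u - w from rfl] at this
    rw [← hMw, ← expandSmulSub M hs]
    simpa using this
  have hya : y ⬝ᵥ a = y ⬝ᵥ (Kᵀ *ᵥ p) + y ⬝ᵥ lam - y ⬝ᵥ (M *ᵥ yd) := by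
    rw [ha, dotProduct_sub, dotProduct_add]
  have hub : u ⬝ᵥ b = u ⬝ᵥ (M *ᵥ p) - u ⬝ᵥ mu := by
    rw [hb, dotProduct_sub]
  rw [hya] at h1
  rw [hub] at h2
  have h2' : (0:ℝ) ≤ α/2 * (u ⬝ᵥ (M *ᵥ u)) - (u ⬝ᵥ (M *ᵥ p) - u ⬝ᵥ mu)
      + 1/(2*α) * (w ⬝ᵥ (M *ᵥ w)) := by
    have hnn : (0:ℝ) ≤ 1/(2*α) := by positivity
    have e : 1/(2*α) * (α^2 * (u ⬝ᵥ (M *ᵥ u)) - 2 * α * (u ⬝ᵥ (M *ᵥ p) - u ⬝ᵥ mu)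
          + w ⬝ᵥ (M *ᵥ w))
        = α/2 * (u ⬝ᵥ (M *ᵥ u)) - (u ⬝ᵥ (M *ᵥ p) - u ⬝ᵥ mu)
          + 1/(2*α) * (w ⬝ᵥ (M *ᵥ w)) := by
      field_simp
    have := mul_nonneg hnn h2
    rw [e] at this
    exact this
  have hyyd : (y - yd) ⬝ᵥ (M *ᵥ (y - yd)) =
      y ⬝ᵥ (M *ᵥ y) - 2 * (y ⬝ᵥ (M *ᵥ yd)) + yd ⬝ᵥ (M *ᵥ yd) := expandSub M hs y yd
  have hly : lam ⬝ᵥ y = y ⬝ᵥ lam := dotProduct_comm _ _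
  have hmu : mu ⬝ᵥ u = u ⬝ᵥ mu := dotProduct_comm _ _
  rw [hav, hbw, hfp, hyyd, hly, hmu]
  linarith [h1, h2']
end Aux

/-- Weak duality between the discretized problem and its dual: for every primal feasible
`(y, u)` and every `(p, λ, μ)`, `J(y, u) ≥ −F(p, λ, μ)`. -/
theorem weak_duality_discretized {n : ℕ}
    (M K : Matrix (Fin n) (Fin n) ℝ) (hM : M.PosDef)
    (α : ℝ) (hα : 0 < α)
    (yd f : Fin n → ℝ)
    (C S : Set (Fin n → ℝ))
    (hCne : C.Nonempty) (hCcl : IsClosed C) (hCconv : Convex ℝ C)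
    (hSne : S.Nonempty) (hScl : IsClosed S) (hSconv : Convex ℝ S)
    (y u : Fin n → ℝ)
    (hfeas : K *ᵥ y = M *ᵥ u + M *ᵥ f) (hyC : y ∈ C) (huS : u ∈ S)
    (p lam mu : Fin n → ℝ) :
    -((((1 : ℝ)/2 * ((Kᵀ *ᵥ p + lam - M *ᵥ yd) ⬝ᵥ (M⁻¹ *ᵥ (Kᵀ *ᵥ p + lam - M *ᵥ yd)))
        + (1 : ℝ)/(2*α) * ((M *ᵥ p - mu) ⬝ᵥ (M⁻¹ *ᵥ (M *ᵥ p - mu)))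
        + (M *ᵥ f) ⬝ᵥ p - (1 : ℝ)/2 * (yd ⬝ᵥ (M *ᵥ yd)) : ℝ) : EReal)
      + suppFn C lam + suppFn S mu)
    ≤ (((1 : ℝ)/2 * ((y - yd) ⬝ᵥ (M *ᵥ (y - yd))) + α/2 * (u ⬝ᵥ (M *ᵥ u)) : ℝ) : EReal) := by
  set r : ℝ := (1 : ℝ)/2 * ((Kᵀ *ᵥ p + lam - M *ᵥ yd) ⬝ᵥ (M⁻¹ *ᵥ (Kᵀ *ᵥ p + lam - M *ᵥ yd)))
        + (1 : ℝ)/(2*α) * ((M *ᵥ p - mu) ⬝ᵥ (M⁻¹ *ᵥ (M *ᵥ p - mu)))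
        + (M *ᵥ f) ⬝ᵥ p - (1 : ℝ)/2 * (yd ⬝ᵥ (M *ᵥ yd)) with hr
  have hC : ((lam ⬝ᵥ y : ℝ) : EReal) ≤ suppFn C lam :=
    le_iSup (fun z : C => ((lam ⬝ᵥ (z : Fin n → ℝ) : ℝ) : EReal)) ⟨y, hyC⟩
  have hS : ((mu ⬝ᵥ u : ℝ) : EReal) ≤ suppFn S mu :=
    le_iSup (fun z : S => ((mu ⬝ᵥ (z : Fin n → ℝ) : ℝ) : EReal)) ⟨u, huS⟩
  have hmono : ((r : EReal) + ((lam ⬝ᵥ y : ℝ) : EReal) + ((mu ⬝ᵥ u : ℝ) : EReal))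
      ≤ (r : EReal) + suppFn C lam + suppFn S mu :=
    add_le_add (add_le_add le_rfl hC) hS
  refine le_trans (EReal.neg_le_neg_iff.mpr hmono) ?_
  have hcast : -((r : EReal) + ((lam ⬝ᵥ y : ℝ) : EReal) + ((mu ⬝ᵥ u : ℝ) : EReal))
      = ((-(r + lam ⬝ᵥ y + mu ⬝ᵥ u) : ℝ) : EReal) := by
    norm_cast
  rw [hcast]
  rw [EReal.coe_le_coe_iff]
  have := weak_duality_real M K hM α hα yd f y u hfeas p lam mu
  rw [hr]
  linarith [this]
end
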